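/- arXiv:1905.10870 — 2 statements merged into one kernel-verified Lean document; each statement's English description precedes it below -/
import Mathlib

section
/- Let S, A be finite sets with a joint pmf q on S × A whose S-marginal is p, and let f : S → A → (0,1) be an ML predictor. Among all decision rules h : A → (0,1) depending only on a (i.e., EO-fair rules), the rule h*(a) = Σ_s f(s,a) p(s) minimizes the expected Bernoulli KL divergence E_{(S,A)∼q}[ KL(Bern(f(S,A)) ‖ Bern(h(A))) ], provided that S and A are independent under q (i.e., q(s,a) = p(s)·m(a) for the A-marginal m). -/
open Finset

/-- KL divergence between Bernoulli distributions with parameters `x` and `y`. -/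
noncomputable def klBern (x y : ℝ) : ℝ :=
  x * Real.log (x / y) + (1 - x) * Real.log ((1 - x) / (1 - y))

lemma klBern_nonneg' (x y : ℝ) (hx0 : 0 < x) (hx1 : x < 1) (hy0 : 0 < y) (hy1 : y < 1) :
    0 ≤ klBern x y := by
  unfold klBern
  have h1 : Real.log (y / x) ≤ y / x - 1 := Real.log_le_sub_one_of_pos (by positivity)
  have h2 : Real.log ((1 - y) / (1 - x)) ≤ (1 - y) / (1 - x) - 1 :=
    Real.log_le_sub_one_of_pos (by apply div_pos <;> linarith)
  have e1 : Real.log (x / y) = - Real.log (y / x) := by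
    rw [← Real.log_inv]; congr 1; field_simp
  have e2 : Real.log ((1 - x) / (1 - y)) = - Real.log ((1 - y) / (1 - x)) := by
    rw [← Real.log_inv]; congr 1
    rw [inv_div]
  have h1' : x * Real.log (y / x) ≤ y - x := by
    calc x * Real.log (y / x) ≤ x * (y / x - 1) := by
          exact mul_le_mul_of_nonneg_left h1 hx0.le
      _ = y - x := by field_simp
  have h2' : (1 - x) * Real.log ((1 - y) / (1 - x)) ≤ x - y := by
    calc (1 - x) * Real.log ((1 - y) / (1 - x)) ≤ (1 - x) * ((1 - y) / (1 - x) - 1) := by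
          exact mul_le_mul_of_nonneg_left h2 (by linarith)
      _ = x - y := by
          rw [mul_sub, mul_one, mul_div_cancel₀ _ (by linarith : (1:ℝ) - x ≠ 0)]; ring
  rw [e1, e2]
  nlinarith

lemma klBern_sub (x y z : ℝ) (hx0 : 0 < x) (hx1 : x < 1) (hy0 : 0 < y) (hy1 : y < 1)
    (hz0 : 0 < z) (hz1 : z < 1) :
    klBern x y - klBern x z =
      x * (Real.log z - Real.log y) + (1 - x) * (Real.log (1 - z) - Real.log (1 - y)) := by
  unfold klBern
  rw [Real.log_div hx0.ne' hy0.ne', Real.log_div hx0.ne' hz0.ne',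
      Real.log_div (by linarith : (1:ℝ) - x ≠ 0) (by linarith : (1:ℝ) - y ≠ 0),
      Real.log_div (by linarith : (1:ℝ) - x ≠ 0) (by linarith : (1:ℝ) - z ≠ 0)]
  ring

theorem eo_predictor_optimal_among_eo_fair_rules
    {S A : Type} [Fintype S] [Fintype A]
    (p : S → ℝ) (hp : ∀ s, 0 ≤ p s) (hpsum : ∑ s, p s = 1)
    (m : A → ℝ) (hm : ∀ a, 0 < m a) (hmsum : ∑ a, m a = 1)
    -- the joint pmf factorizes: q(s,a) = p(s) m(a), i.e. S ⊥ A
    (q : S → A → ℝ) (hq : ∀ s a, q s a = p s * m a)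
    (f : S → A → ℝ) (hf0 : ∀ s a, 0 < f s a) (hf1 : ∀ s a, f s a < 1)
    (h : A → ℝ) (hh0 : ∀ a, 0 < h a) (hh1 : ∀ a, h a < 1) :
    ∑ s, ∑ a, q s a * klBern (f s a) (∑ s', f s' a * p s') ≤
      ∑ s, ∑ a, q s a * klBern (f s a) (h a) := by
  set g : A → ℝ := fun a => ∑ s', f s' a * p s' with hgdef
  obtain ⟨s₀, hs₀⟩ : ∃ s, 0 < p s := by
    by_contra hc
    push_neg at hc
    have : ∀ s, p s = 0 := fun s => le_antisymm (hc s) (hp s)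
    simp [this] at hpsum
  have hg0 : ∀ a, 0 < g a := by
    intro a
    have : f s₀ a * p s₀ ≤ g a :=
      Finset.single_le_sum (f := fun s' => f s' a * p s')
        (fun i _ => mul_nonneg (hf0 i a).le (hp i)) (Finset.mem_univ s₀)
    have := mul_pos (hf0 s₀ a) hs₀
    linarith
  have hg1 : ∀ a, g a < 1 := by
    intro a
    have : g a < ∑ s', p s' := by
      apply Finset.sum_lt_sum
      · intro i _
        nlinarith [hf1 i a, hp i, hf0 i a]
      · exact ⟨s₀, Finset.mem_univ s₀, by nlinarith [hf1 s₀ a]⟩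
    linarith [hpsum ▸ this]
  rw [← sub_nonneg, ← Finset.sum_sub_distrib]
  have key : ∀ s, (∑ a, q s a * klBern (f s a) (h a)) - (∑ a, q s a * klBern (f s a) (g a)) =
      ∑ a, q s a * (f s a * (Real.log (g a) - Real.log (h a)) +
        (1 - f s a) * (Real.log (1 - g a) - Real.log (1 - h a))) := by
    intro s
    rw [← Finset.sum_sub_distrib]
    refine Finset.sum_congr rfl fun a _ => ?_
    rw [← mul_sub, klBern_sub _ _ _ (hf0 s a) (hf1 s a) (hh0 a) (hh1 a) (hg0 a) (hg1 a)]
  change 0 ≤ ∑ s, ((∑ a, q s a * klBern (f s a) (h a)) - (∑ a, q s a * klBern (f s a) (g a)))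
  simp only [key]
  rw [Finset.sum_comm]
  have inner : ∀ a, (∑ s, q s a * (f s a * (Real.log (g a) - Real.log (h a)) +
      (1 - f s a) * (Real.log (1 - g a) - Real.log (1 - h a)))) =
      m a * klBern (g a) (h a) := by
    intro a
    have e1 : ∑ s, p s * f s a = g a := by
      rw [hgdef]; exact Finset.sum_congr rfl fun s _ => mul_comm _ _
    have e2 : ∑ s, p s * (1 - f s a) = 1 - g a := by
      rw [Finset.sum_congr rfl fun s _ => mul_one_sub (p s) (f s a),
        Finset.sum_sub_distrib, hpsum, e1]
    calc (∑ s, q s a * (f s a * (Real.log (g a) - Real.log (h a)) +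
          (1 - f s a) * (Real.log (1 - g a) - Real.log (1 - h a))))
        = ∑ s, ((m a * (Real.log (g a) - Real.log (h a))) * (p s * f s a) +
            (m a * (Real.log (1 - g a) - Real.log (1 - h a))) * (p s * (1 - f s a))) := by
          refine Finset.sum_congr rfl fun s _ => ?_
          rw [hq]; ring
      _ = (m a * (Real.log (g a) - Real.log (h a))) * (∑ s, p s * f s a) +
            (m a * (Real.log (1 - g a) - Real.log (1 - h a))) * (∑ s, p s * (1 - f s a)) := by
          rw [Finset.sum_add_distrib, ← Finset.mul_sum, ← Finset.mul_sum]
      _ = m a * klBern (g a) (h a) := by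
          rw [e1, e2]
          unfold klBern
          rw [Real.log_div (hg0 a).ne' (hh0 a).ne',
            Real.log_div (by linarith [hg1 a] : (1:ℝ) - g a ≠ 0)
              (by linarith [hh1 a] : (1:ℝ) - h a ≠ 0)]
          ring
  simp only [inner]
  exact Finset.sum_nonneg fun a _ =>
    mul_nonneg (hm a).le (klBern_nonneg' _ _ (hg0 a) (hg1 a) (hh0 a) (hh1 a))
end

section
/- In the linear-abduction setting with S finite (pmf p), residual ε distributed according to a pmf ν on a finite set E ⊆ ℝ, A = g(S) + ε with S ⊥ ε, and f_eo : ℝ → [0,1]: the distribution of the AA decision probability f_aa(S, A) = Σ_{s'} p(s') f_eo(g(s') + ε) depends only on ε and not on S. Consequently f_aa(S,A) is independent of S, i.e., the AA predictor satisfies demographic parity. -/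
open Finset

/-- The AA predictor in the linear-abduction setting. -/
noncomputable def aaPredictor {S : Type} [Fintype S]
    (p : S → ℝ) (g : S → ℝ) (feo : ℝ → ℝ) (s : S) (a : ℝ) : ℝ :=
  ∑ s', p s' * feo (g s' + (a - g s))

theorem aa_predictor_demographic_parity
    {S E : Type} [Fintype S] [Fintype E] [DecidableEq S]
    (p : S → ℝ) (hp : ∀ s, 0 ≤ p s) (hpsum : ∑ s, p s = 1)
    (ν : E → ℝ) (hν : ∀ e, 0 ≤ ν e) (hνsum : ∑ e, ν e = 1)
    (g : S → ℝ) (ε : E → ℝ) (feo : ℝ → ℝ) (hfeo : ∀ x, 0 ≤ feo x ∧ feo x ≤ 1) :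
    -- the AA decision probability f_aa(S, A) with A = g(S) + ε is a function
    -- of ε alone, not of S:
    (∃ φ : ℝ → ℝ, ∀ (s : S) (e : E),
      aaPredictor p g feo s (g s + ε e) = φ (ε e)) ∧
    -- consequently f_aa(S, A) is independent of S under the product law p ⊗ ν:
    (∀ (Q : ℝ → Prop) [DecidablePred Q] (s : S),
      (∑ se : S × E,
        if se.1 = s ∧ Q (aaPredictor p g feo se.1 (g se.1 + ε se.2))
        then p se.1 * ν se.2 else 0)
      = p s *
        (∑ se : S × E,
          if Q (aaPredictor p g feo se.1 (g se.1 + ε se.2))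
          then p se.1 * ν se.2 else 0)) := by
  have key : ∀ (s : S) (e : E),
      aaPredictor p g feo s (g s + ε e) = ∑ s', p s' * feo (g s' + ε e) := by
    intro s e
    unfold aaPredictor
    congr 1
    funext s'
    ring_nf
  constructor
  · exact ⟨fun t => ∑ s', p s' * feo (g s' + t), key⟩
  · intro Q _ s
    have hQ : ∀ (s1 : S) (e : E),
        Q (aaPredictor p g feo s1 (g s1 + ε e)) ↔
        Q (∑ s', p s' * feo (g s' + ε e)) := by
      intro s1 e; rw [key]
    rw [Fintype.sum_prod_type, Fintype.sum_prod_type]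
    have lhs : ∀ s1 : S, (∑ e : E,
        if s1 = s ∧ Q (aaPredictor p g feo s1 (g s1 + ε e))
        then p s1 * ν e else 0)
        = if s1 = s then ∑ e : E,
            if Q (∑ s', p s' * feo (g s' + ε e)) then p s1 * ν e else 0
          else 0 := by
      intro s1
      by_cases h : s1 = s
      · simp only [h, true_and, if_true]
        exact Finset.sum_congr rfl fun e _ => by simp only [key]
      · simp [h]
    rw [Finset.sum_congr rfl fun s1 _ => lhs s1, Finset.sum_ite_eq' Finset.univ s]
    simp only [Finset.mem_univ, if_true]
    have rhs : ∀ s1 : S, (∑ e : E,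
        if Q (aaPredictor p g feo s1 (g s1 + ε e)) then p s1 * ν e else 0)
        = p s1 * ∑ e : E, if Q (∑ s', p s' * feo (g s' + ε e)) then ν e else 0 := by
      intro s1
      rw [Finset.mul_sum]
      refine Finset.sum_congr rfl fun e _ => ?_
      simp only [key]
      by_cases h : Q (∑ s', p s' * feo (g s' + ε e)) <;> simp [h]
    rw [Finset.sum_congr rfl fun s1 _ => rhs s1, ← Finset.sum_mul, hpsum, one_mul]
    rw [Finset.mul_sum]
    refine Finset.sum_congr rfl fun e _ => ?_
    by_cases h : Q (∑ s', p s' * feo (g s' + ε e)) <;> simp [h, mul_comm]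
end
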